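/- Transfinite induction holds for Cantor normal forms (Theorem 5.1): the strict order < restricted to the subtype {t : Tree // isCNF t} is well-founded; equivalently, for every predicate P on this subtype, if for every x, (∀ y, y < x → P y) implies P x, then P x holds for every x. -/

import Mathlib

namespace CNFOrd

/-- Binary trees: `omega a b` represents the ordinal `ω^a + b`. -/
inductive T : Type
  | zero : T
  | omega : T → T → T
  deriving DecidableEq

namespace T

/-- The strict order on trees. -/
inductive Lt : T → T → Prop
  | lt1 {a b : T} : Lt zero (omega a b)
  | lt2 {a b c d : T} : Lt a c → Lt (omega a b) (omega c d)
  | lt3 {a b c d : T} : a = c → Lt b d → Lt (omega a b) (omega c d)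

/-- `a ≥ b` means `b < a` or `a = b`. -/
def Ge (a b : T) : Prop := Lt b a ∨ a = b

/-- First exponent of a tree. -/
def fst : T → T
  | zero => zero
  | omega a _ => a

/-- The predicate of being in Cantor normal form. -/
inductive isCNF : T → Prop
  | zero : isCNF zero
  | omega {a b : T} : isCNF a → isCNF b → Ge a (fst b) → isCNF (omega a b)

/-- Decidability of the strict order. -/
def decLt : (a b : T) → Decidable (Lt a b)
  | _, zero => isFalse fun h => nomatch h
  | zero, omega _ _ => isTrue .lt1
  | omega a b, omega c d =>
    match decLt a c with
    | isTrue h => isTrue (.lt2 h)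
    | isFalse h1 =>
      if he : a = c then
        match decLt b d with
        | isTrue h2 => isTrue (.lt3 he h2)
        | isFalse h2 => isFalse fun h => by
            cases h with
            | lt2 h' => exact h1 h'
            | lt3 _ h2' => exact h2 h2'
      else isFalse fun h => by
            cases h with
            | lt2 h' => exact h1 h'
            | lt3 he' _ => exact he he'

instance : ∀ a b : T, Decidable (Lt a b) := decLt

/-- List insertion. -/
def insert (a : T) : T → T
  | zero => omega a zero
  | omega b c => if Lt a b then omega b (insert a c) else omega a (omega b c)

/-- The permutation congruence: smallest equivalence relation which is a
congruence for `omega` and satisfies the swap rule. -/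
inductive Perm : T → T → Prop
  | refl (a : T) : Perm a a
  | symm {a b : T} : Perm a b → Perm b a
  | trans {a b c : T} : Perm a b → Perm b c → Perm a c
  | congr {a a' b b' : T} : Perm a a' → Perm b b' → Perm (omega a b) (omega a' b')
  | swap (a b c : T) : Perm (omega a (omega b c)) (omega b (omega a c))

instance permSetoid : Setoid T := ⟨Perm, ⟨Perm.refl, Perm.symm, Perm.trans⟩⟩

/-- Hessenberg sum. -/
def oplus : T → T → T
  | zero, y => y
  | omega a b, y => omega a (oplus b y)

/-- Ordinal addition. -/
def add : T → T → T
  | zero, b => b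
  | a, zero => a
  | omega a c, omega b d => if Lt a b then omega b d else omega a (add c (omega b d))

/-- Ordinal multiplication. -/
def mul : T → T → T
  | zero, _ => zero
  | _, zero => zero
  | a, omega zero d => add a (mul a d)
  | omega a c, omega b d => omega (add a b) (mul (omega a c) d)

end T

end CNFOrd


namespace CNFOrd
namespace T

open Ordinal in
/-- Evaluation into ordinals. -/
noncomputable def eval : T → Ordinal.{0}
  | zero => 0
  | omega a b => ω ^ eval a + eval b

open Ordinal in
mutual

theorem eval_mono : ∀ s t : T, Lt s t → isCNF s → isCNF t → eval s < eval t
  | _, _, .lt1 (a := c) (b := d), _, _ => by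
      have : (0 : Ordinal) < ω ^ eval c := opow_pos _ omega0_pos
      simpa [eval] using lt_of_lt_of_le this le_self_add
  | omega a b, omega c d, .lt2 h, hs, ht => by
      have hac : eval a < eval c := by
        cases hs with | omega ha hb _ =>
        cases ht with | omega hc hd _ =>
        exact eval_mono a c h ha hc
      have h1 : eval (omega a b) < ω ^ (eval a + 1) := eval_bound (omega a b) hs
      have h2 : ω ^ (eval a + 1) ≤ ω ^ eval c :=
        opow_le_opow_right omega0_pos (by rwa [Order.add_one_le_iff])
      calc eval (omega a b) < ω ^ eval c := lt_of_lt_of_le h1 h2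
        _ ≤ eval (omega c d) := le_self_add
  | omega a b, omega c d, .lt3 he h, hs, ht => by
      have hbd : eval b < eval d := by
        cases hs with | omega ha hb _ =>
        cases ht with | omega hc hd _ =>
        exact eval_mono b d h hb hd
      subst he
      simpa [eval] using add_lt_add_right hbd (ω ^ eval a)
termination_by s t => sizeOf s + sizeOf t
decreasing_by all_goals (simp_wf; try omega)

theorem eval_bound : ∀ t : T, isCNF t → eval t < ω ^ (eval (fst t) + 1)
  | zero, _ => by
      simp [eval, fst, opow_pos _ omega0_pos, omega0_pos]
  | omega a zero, hcnf => by
      have h1 : ω ^ eval a < ω ^ (eval a + 1) :=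
        (opow_lt_opow_iff_right one_lt_omega0).2 (lt_add_one _)
      have h2 : eval zero < ω ^ (eval a + 1) := by
        simpa [eval] using opow_pos (eval a + 1) omega0_pos
      have := principal_add_omega0_opow (eval a + 1) h1 h2
      simpa [eval, fst] using this
  | omega a (omega e f), hcnf => by
      cases hcnf with | omega ha hb hge =>
      have h1 : ω ^ eval a < ω ^ (eval a + 1) :=
        (opow_lt_opow_iff_right one_lt_omega0).2 (lt_add_one _)
      have h2 : eval (omega e f) < ω ^ (eval a + 1) := by
        have hE : eval e ≤ eval a := by
          rcases hge with h | h
          · cases hb with | omega he hf _ =>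
            exact le_of_lt (eval_mono e a h he ha)
          · simp [fst] at h; rw [h]
        have := eval_bound (omega e f) hb
        calc eval (omega e f) < ω ^ (eval (fst (omega e f)) + 1) := this
          _ ≤ ω ^ (eval a + 1) :=
            opow_le_opow_right omega0_pos (by simpa [fst] using add_le_add_right hE 1)
      have := principal_add_omega0_opow (eval a + 1) h1 h2
      simpa [eval, fst] using this
termination_by t => sizeOf t
decreasing_by all_goals (simp_wf; try subst_vars; first | omega | (simp only [T.omega.sizeOf_spec]; omega))

end

end T
end CNFOrd

open CNFOrd T in
/-- transfinite induction holds for Cantor normal forms: the strict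
order on the subtype is well-founded, equivalently every inductive predicate holds
everywhere. -/
theorem transfinite_induction :
    WellFounded (fun x y : {t : T // isCNF t} => Lt x.val y.val) ∧
    ∀ P : {t : T // isCNF t} → Prop,
      (∀ x, (∀ y, Lt y.val x.val → P y) → P x) → ∀ x, P x := by
  have wf : WellFounded (fun x y : {t : T // isCNF t} => Lt x.val y.val) := by
    have : Subrelation (fun x y : {t : T // isCNF t} => Lt x.val y.val)
        (InvImage (· < ·) (fun x => T.eval x.val)) := by
      intro x y h
      exact T.eval_mono x.val y.val h x.2 y.2
    exact this.wf (InvImage.wf _ Ordinal.lt_wf)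
  exact ⟨wf, fun P h x => wf.induction x h⟩
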